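/- In the setting of the previous feasibility problem, the minimum over all feasible frequency allocations of the maximum per-slot total frequency max_{m∈{2,…,N+1}} ∑_{n=1}^{m−1} f_{n,m}, subject only to the completion constraints ∑_{m=n+1}^{N+1} f_{n,m}·Δt_m ≥ F_n with f_{n,m} ≥ 0, equals max_{n∈{1,…,N}} (∑_{i=n}^{N} F_i)/(∑_{i=n+1}^{N+1} Δt_i). -/

import Mathlib

/-- The minimum over all allocations meeting the completion constraints of the
maximum per-slot total frequency equals
max_{n} (∑_{i=n}^{N} F_i)/(∑_{i=n+1}^{N+1} Δt_i).  Stated as: this threshold is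
attainable as an upper bound on every slot's total for some feasible allocation,
and every feasible allocation has some slot whose total reaches the threshold. -/

lemma seg' (l u A B C : ℝ) (hlu : l ≤ u) (hCB : C ≤ B) (hBA : B ≤ A) :
    max 0 (min u A - max l B) + max 0 (min u B - max l C)
      = max 0 (min u A - max l C) := by
  rcases le_total u B with h1 | h1 <;> rcases le_total l B with h2 | h2 <;>
    simp [min_def, max_def] <;> split_ifs <;> linarith

lemma tele' (s : ℕ → ℝ) (l u : ℝ) (hlu : l ≤ u) (p q : ℕ) (hpq : p ≤ q)
    (hs : ∀ j k, p ≤ j → j ≤ k → k ≤ q + 1 → s k ≤ s j) :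
    ∑ k ∈ Finset.Icc p q, max 0 (min u (s k) - max l (s (k+1)))
      = max 0 (min u (s p) - max l (s (q+1))) := by
  induction q with
  | zero =>
    have : p = 0 := by omega
    subst this; simp
  | succ q ih =>
    rcases eq_or_lt_of_le hpq with hp' | hp'
    · subst hp'
      rw [Finset.Icc_self, Finset.sum_singleton]
    · have hpq' : p ≤ q := by omega
      rw [Finset.sum_Icc_succ_top (by omega),
        ih hpq' (fun j k hj hjk hk => hs j k hj hjk (by omega))]
      exact seg' l u (s p) (s (q+1)) (s (q+2)) hlu
        (hs (q+1) (q+2) (by omega) (by omega) le_rfl)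
        (hs p (q+1) le_rfl (by omega) (by omega))

theorem stmt_6 (N : ℕ) (hN : 1 ≤ N) (F Δt : ℕ → ℝ)
    (hF : ∀ n ∈ Finset.Icc 1 N, 0 < F n)
    (hΔt : ∀ m ∈ Finset.Icc 2 (N + 1), 0 < Δt m) :
    IsLeast
      {y : ℝ | ∃ f : ℕ → ℕ → ℝ,
        (∀ n ∈ Finset.Icc 1 N, ∀ m ∈ Finset.Icc (n + 1) (N + 1), 0 ≤ f n m) ∧
        (∀ n ∈ Finset.Icc 1 N,
          F n ≤ ∑ m ∈ Finset.Icc (n + 1) (N + 1), f n m * Δt m) ∧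
        y = (Finset.Icc 2 (N + 1)).sup'
            (Finset.nonempty_Icc.mpr (by omega))
            (fun m => ∑ n ∈ Finset.Icc 1 (m - 1), f n m)}
      ((Finset.Icc 1 N).sup' (Finset.nonempty_Icc.mpr hN)
        (fun n => (∑ i ∈ Finset.Icc n N, F i) /
          (∑ i ∈ Finset.Icc (n + 1) (N + 1), Δt i))) := by
  classical
  set G : ℕ → ℝ := fun n => ∑ i ∈ Finset.Icc n N, F i with hGdef
  set D : ℕ → ℝ := fun m => ∑ i ∈ Finset.Icc (m+1) (N+1), Δt i with hDdef
  set c : ℝ := (Finset.Icc 1 N).sup' (Finset.nonempty_Icc.mpr hN)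
    (fun n => G n / D n) with hcdef
  -- basic facts
  have hD_pos : ∀ n, 1 ≤ n → n ≤ N → 0 < D n := by
    intro n h1 h2
    refine Finset.sum_pos (fun i hi => hΔt i ?_) (Finset.nonempty_Icc.mpr (by omega))
    rw [Finset.mem_Icc] at hi ⊢; omega
  have hG_nonneg : ∀ n, 1 ≤ n → 0 ≤ G n := by
    intro n h1
    refine Finset.sum_nonneg (fun i hi => (hF i ?_).le)
    rw [Finset.mem_Icc] at hi ⊢; omega
  have hG_pos : ∀ n, 1 ≤ n → n ≤ N → 0 < G n := by
    intro n h1 h2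
    refine Finset.sum_pos (fun i hi => hF i ?_) (Finset.nonempty_Icc.mpr h2)
    rw [Finset.mem_Icc] at hi ⊢; omega
  have hDanti : ∀ j k, 1 ≤ j → j ≤ k → D k ≤ D j := by
    intro j k h1 h2
    refine Finset.sum_le_sum_of_subset_of_nonneg
      (Finset.Icc_subset_Icc (by omega) le_rfl) (fun i hi _ => (hΔt i ?_).le)
    rw [Finset.mem_Icc] at hi ⊢; omega
  have hGanti : ∀ j k, 1 ≤ j → j ≤ k → G k ≤ G j := by
    intro j k h1 h2
    refine Finset.sum_le_sum_of_subset_of_nonneg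
      (Finset.Icc_subset_Icc (by omega) le_rfl) (fun i hi _ => (hF i ?_).le)
    rw [Finset.mem_Icc] at hi ⊢; omega
  have hDstep : ∀ m, 2 ≤ m → m ≤ N + 1 → D (m-1) = Δt m + D m := by
    intro m h1 h2
    have hm1 : m - 1 + 1 = m := by omega
    show ∑ i ∈ Finset.Icc (m-1+1) (N+1), Δt i = Δt m + ∑ i ∈ Finset.Icc (m+1) (N+1), Δt i
    rw [hm1]
    rw [show Finset.Icc m (N+1) = insert m (Finset.Icc (m+1) (N+1)) by
      rw [Finset.Icc_add_one_left_eq_Ioc, Finset.Ioc_insert_left (by omega)]]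
    rw [Finset.sum_insert (by simp [Finset.mem_Icc])]
  have hGstep : ∀ n, 1 ≤ n → n ≤ N → G n = F n + G (n+1) := by
    intro n h1 h2
    show ∑ i ∈ Finset.Icc n N, F i = F n + ∑ i ∈ Finset.Icc (n+1) N, F i
    rw [show Finset.Icc n N = insert n (Finset.Icc (n+1) N) by
      rw [Finset.Icc_add_one_left_eq_Ioc, Finset.Ioc_insert_left (by omega)]]
    rw [Finset.sum_insert (by simp [Finset.mem_Icc])]
  have hGNp1 : G (N+1) = 0 := by
    show ∑ i ∈ Finset.Icc (N+1) N, F i = 0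
    rw [Finset.Icc_eq_empty (by omega), Finset.sum_empty]
  have hDNp1 : D (N+1) = 0 := by
    show ∑ i ∈ Finset.Icc (N+2) (N+1), Δt i = 0
    rw [Finset.Icc_eq_empty (by omega), Finset.sum_empty]
  have hDN : D N = Δt (N+1) := by
    show ∑ i ∈ Finset.Icc (N+1) (N+1), Δt i = Δt (N+1)
    rw [Finset.Icc_self, Finset.sum_singleton]
  have hcn : ∀ n, 1 ≤ n → n ≤ N → G n / D n ≤ c :=
    fun n h1 h2 => Finset.le_sup' (fun n => G n / D n) (Finset.mem_Icc.mpr ⟨h1, h2⟩)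
  have hc_pos : 0 < c :=
    lt_of_lt_of_le (div_pos (hG_pos N hN le_rfl) (hD_pos N hN le_rfl)) (hcn N hN le_rfl)
  have hGD : ∀ n, 1 ≤ n → n ≤ N → G n ≤ c * D n :=
    fun n h1 h2 => by
      have := hcn n h1 h2
      rw [div_le_iff₀ (hD_pos n h1 h2)] at this
      linarith [this]
  have hΔtN1 : 0 < Δt (N+1) := hΔt (N+1) (Finset.mem_Icc.mpr ⟨by omega, le_rfl⟩)
  have hclast : Δt (N+1) ≤ G 1 / c := by
    rw [le_div_iff₀ hc_pos, mul_comm]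
    have h1 : c ≤ G 1 / Δt (N+1) := by
      refine Finset.sup'_le _ _ (fun n hn => ?_)
      rw [Finset.mem_Icc] at hn
      have := hDN ▸ hDanti n N hn.1 hn.2
      exact div_le_div₀ (hG_nonneg 1 le_rfl) (hGanti 1 n le_rfl hn.1) hΔtN1 this
    rw [le_div_iff₀ hΔtN1] at h1
    linarith
  -- the allocation
  set f : ℕ → ℕ → ℝ := fun n m =>
    c * max 0 (min (D (m-1)) (G n / c) - max (D m) (G (n+1) / c)) / Δt m with hfdef
  -- nonnegativity
  have hnn : ∀ n ∈ Finset.Icc 1 N, ∀ m ∈ Finset.Icc (n + 1) (N + 1), 0 ≤ f n m := by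
    intro n hn m hm
    rw [Finset.mem_Icc] at hn hm
    exact div_nonneg (mul_nonneg hc_pos.le (le_max_left _ _))
      (hΔt m (Finset.mem_Icc.mpr ⟨by omega, hm.2⟩)).le
  -- slot sums
  have hDstep_le : ∀ m, 2 ≤ m → m ≤ N + 1 → D m ≤ D (m-1) := by
    intro m h2 h3
    have := hΔt m (Finset.mem_Icc.mpr ⟨h2, h3⟩)
    rw [hDstep m h2 h3]; linarith
  have hslot : ∀ m, 2 ≤ m → m ≤ N + 1 →
      ∑ n ∈ Finset.Icc 1 (m-1), f n m
        = c * max 0 (min (D (m-1)) (G 1 / c) - max (D m) (G m / c)) / Δt m := by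
    intro m h2 h3
    have hsum : ∑ n ∈ Finset.Icc 1 (m-1), f n m
        = c * (∑ n ∈ Finset.Icc 1 (m-1),
            max 0 (min (D (m-1)) (G n / c) - max (D m) (G (n+1) / c))) / Δt m := by
      rw [Finset.mul_sum, Finset.sum_div]
    rw [hsum]
    have htel := tele' (fun n => G n / c) (D m) (D (m-1)) (hDstep_le m h2 h3)
      1 (m-1) (by omega)
      (fun j k hj hjk hk => by
        have : G k ≤ G j := hGanti j k hj hjk
        exact (div_le_div_iff_of_pos_right hc_pos).mpr this)
    have hm1 : m - 1 + 1 = m := by omega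
    rw [hm1] at htel
    rw [htel]
  have hslot_le : ∀ m ∈ Finset.Icc 2 (N+1), ∑ n ∈ Finset.Icc 1 (m-1), f n m ≤ c := by
    intro m hm
    rw [Finset.mem_Icc] at hm
    obtain ⟨h2, h3⟩ := hm
    rw [hslot m h2 h3]
    have hΔm : 0 < Δt m := hΔt m (Finset.mem_Icc.mpr ⟨h2, h3⟩)
    rw [div_le_iff₀ hΔm]
    have hb : max 0 (min (D (m-1)) (G 1 / c) - max (D m) (G m / c)) ≤ Δt m := by
      have e1 : min (D (m-1)) (G 1 / c) ≤ D (m-1) := min_le_left _ _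
      have e2 : D m ≤ max (D m) (G m / c) := le_max_left _ _
      have e3 := hDstep m h2 h3
      exact max_le hΔm.le (by linarith)
    exact mul_le_mul_of_nonneg_left hb hc_pos.le
  have hslot_top : ∑ n ∈ Finset.Icc 1 ((N+1)-1), f n (N+1) = c := by
    rw [hslot (N+1) (by omega) le_rfl]
    simp only [Nat.add_sub_cancel]
    rw [hDN, hDNp1, hGNp1]
    rw [min_eq_left hclast, zero_div, max_self, sub_zero, max_eq_right hΔtN1.le]
    field_simp
  -- completion constraints: exact equality
  have hcomp : ∀ n ∈ Finset.Icc 1 N,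
      ∑ m ∈ Finset.Icc (n + 1) (N + 1), f n m * Δt m = F n := by
    intro n hn
    rw [Finset.mem_Icc] at hn
    obtain ⟨h1, h2⟩ := hn
    have hterm : ∀ m ∈ Finset.Icc (n+1) (N+1), f n m * Δt m
        = c * max 0 (min (G n / c) (D (m-1)) - max (G (n+1) / c) (D m)) := by
      intro m hm
      rw [Finset.mem_Icc] at hm
      have hΔm : (Δt m) ≠ 0 := (hΔt m (Finset.mem_Icc.mpr ⟨by omega, hm.2⟩)).ne'
      show c * max 0 (min (D (m-1)) (G n / c) - max (D m) (G (n+1) / c)) / Δt m * Δt m = _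
      rw [div_mul_cancel₀ _ hΔm, min_comm (D (m-1)) (G n / c), max_comm (D m) (G (n+1) / c)]
    rw [Finset.sum_congr rfl hterm, ← Finset.mul_sum]
    have hreidx : ∑ m ∈ Finset.Icc (n+1) (N+1),
        max 0 (min (G n / c) (D (m-1)) - max (G (n+1) / c) (D m))
        = ∑ k ∈ Finset.Icc n N,
            max 0 (min (G n / c) (D k) - max (G (n+1) / c) (D (k+1))) := by
      rw [show Finset.Icc (n+1) (N+1) = Finset.map (addLeftEmbedding 1) (Finset.Icc n N) by
        rw [Finset.map_add_left_Icc]; congr 1 <;> omega]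
      rw [Finset.sum_map]
      refine Finset.sum_congr rfl (fun k hk => ?_)
      have e1 : (addLeftEmbedding 1) k = k + 1 := by
        simp [addLeftEmbedding_apply, Nat.add_comm]
      rw [e1]
      simp
    rw [hreidx]
    have htel := tele' D (G (n+1) / c) (G n / c)
      (by
        have : G (n+1) ≤ G n := hGanti n (n+1) h1 (by omega)
        exact (div_le_div_iff_of_pos_right hc_pos).mpr this)
      n N h2
      (fun j k hj hjk hk => hDanti j k (by omega) hjk)
    rw [htel, hDNp1]
    have e1 : min (G n / c) (D n) = G n / c := by
      refine min_eq_left ?_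
      rw [div_le_iff₀ hc_pos]
      have := hGD n h1 h2
      linarith [this]
    have e2 : max (G (n+1) / c) 0 = G (n+1) / c :=
      max_eq_left (div_nonneg (hG_nonneg (n+1) (by omega)) hc_pos.le)
    rw [e1, e2]
    have e3 : G n / c - G (n+1) / c = F n / c := by
      rw [div_sub_div_same, hGstep n h1 h2]; ring_nf
    rw [e3, max_eq_right (div_nonneg (hF n (Finset.mem_Icc.mpr ⟨h1, h2⟩)).le hc_pos.le)]
    field_simp
  -- the sup' of slot sums equals c
  have hsup_eq : c = (Finset.Icc 2 (N + 1)).sup'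
      (Finset.nonempty_Icc.mpr (by omega))
      (fun m => ∑ n ∈ Finset.Icc 1 (m - 1), f n m) := by
    apply le_antisymm
    · have := Finset.le_sup' (f := fun m => ∑ n ∈ Finset.Icc 1 (m - 1), f n m)
        (Finset.mem_Icc.mpr ⟨by omega, le_rfl⟩ : N + 1 ∈ Finset.Icc 2 (N+1))
      rw [hslot_top] at this
      exact this
    · exact Finset.sup'_le _ _ hslot_le
  constructor
  · exact ⟨f, hnn, fun n hn => (hcomp n hn).ge, hsup_eq⟩
  · rintro y ⟨g, hgnn, hgcomp, rfl⟩
    refine Finset.sup'_le _ _ (fun n hn => ?_)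
    rw [Finset.mem_Icc] at hn
    obtain ⟨h1, h2⟩ := hn
    show G n / D n ≤ _
    rw [div_le_iff₀ (hD_pos n h1 h2)]
    set y := (Finset.Icc 2 (N + 1)).sup'
      (Finset.nonempty_Icc.mpr (by omega))
      (fun m => ∑ i ∈ Finset.Icc 1 (m - 1), g i m) with hydef
    have hy_m : ∀ m, 2 ≤ m → m ≤ N + 1 → ∑ i ∈ Finset.Icc 1 (m-1), g i m ≤ y :=
      fun m hm2 hm3 => Finset.le_sup' (fun m => ∑ i ∈ Finset.Icc 1 (m - 1), g i m)
        (Finset.mem_Icc.mpr ⟨hm2, hm3⟩)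
    have step1 : G n ≤ ∑ i ∈ Finset.Icc n N, ∑ m ∈ Finset.Icc (i+1) (N+1), g i m * Δt m :=
      Finset.sum_le_sum (fun i hi => by
        rw [Finset.mem_Icc] at hi
        exact hgcomp i (Finset.mem_Icc.mpr ⟨by omega, hi.2⟩))
    have step2 : ∀ i ∈ Finset.Icc n N,
        ∑ m ∈ Finset.Icc (i+1) (N+1), g i m * Δt m
          = ∑ m ∈ Finset.Icc (n+1) (N+1), (if i + 1 ≤ m then g i m * Δt m else 0) := by
      intro i hi
      rw [Finset.mem_Icc] at hi
      rw [← Finset.sum_filter]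
      apply Finset.sum_congr _ (fun _ _ => rfl)
      ext m
      simp only [Finset.mem_filter, Finset.mem_Icc]
      omega
    have step3 : ∀ m ∈ Finset.Icc (n+1) (N+1),
        ∑ i ∈ Finset.Icc n N, (if i + 1 ≤ m then g i m * Δt m else 0) ≤ y * Δt m := by
      intro m hm
      rw [Finset.mem_Icc] at hm
      have hΔm : 0 < Δt m := hΔt m (Finset.mem_Icc.mpr ⟨by omega, hm.2⟩)
      rw [← Finset.sum_filter]
      have hsub : (Finset.Icc n N).filter (fun i => i + 1 ≤ m) ⊆ Finset.Icc 1 (m-1) := by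
        intro i hi
        simp only [Finset.mem_filter, Finset.mem_Icc] at hi ⊢
        omega
      have hnng : ∀ i ∈ Finset.Icc 1 (m-1),
          i ∉ (Finset.Icc n N).filter (fun i => i + 1 ≤ m) → 0 ≤ g i m * Δt m := by
        intro i hi _
        rw [Finset.mem_Icc] at hi
        refine mul_nonneg (hgnn i (Finset.mem_Icc.mpr ⟨hi.1, by omega⟩)
          m (Finset.mem_Icc.mpr ⟨by omega, hm.2⟩)) hΔm.le
      calc ∑ i ∈ (Finset.Icc n N).filter (fun i => i + 1 ≤ m), g i m * Δt m
          ≤ ∑ i ∈ Finset.Icc 1 (m-1), g i m * Δt m :=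
            Finset.sum_le_sum_of_subset_of_nonneg hsub hnng
        _ = (∑ i ∈ Finset.Icc 1 (m-1), g i m) * Δt m := (Finset.sum_mul _ _ _).symm
        _ ≤ y * Δt m := mul_le_mul_of_nonneg_right (hy_m m (by omega) hm.2) hΔm.le
    calc G n ≤ ∑ i ∈ Finset.Icc n N, ∑ m ∈ Finset.Icc (i+1) (N+1), g i m * Δt m := step1
      _ = ∑ i ∈ Finset.Icc n N, ∑ m ∈ Finset.Icc (n+1) (N+1),
            (if i + 1 ≤ m then g i m * Δt m else 0) := Finset.sum_congr rfl step2
      _ = ∑ m ∈ Finset.Icc (n+1) (N+1), ∑ i ∈ Finset.Icc n N,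
            (if i + 1 ≤ m then g i m * Δt m else 0) := Finset.sum_comm
      _ ≤ ∑ m ∈ Finset.Icc (n+1) (N+1), y * Δt m := Finset.sum_le_sum step3
      _ = y * D n := by rw [← Finset.mul_sum]
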